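/- If (a_1,…,a_n) is an n-tuple of strictly positive integers with M_n(a_1,…,a_n) = S or M_n(a_1,…,a_n) = −S, then there exists an index i with 2 ≤ i ≤ n−1 such that a_i = 1. -/

import Mathlib

/-- The elementary matrix `[[a, -1], [1, 0]]`. -/
def genMat (a : ℤ) : Matrix (Fin 2) (Fin 2) ℤ := !![a, -1; 1, 0]

/-- `Mprod [a₁, …, aₙ] = [[aₙ,-1],[1,0]] ⋯ [[a₁,-1],[1,0]]`. -/
def Mprod (l : List ℤ) : Matrix (Fin 2) (Fin 2) ℤ := ((l.map genMat).reverse).prod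

lemma Mprod_concat (t : List ℤ) (b : ℤ) :
    Mprod (t ++ [b]) = genMat b * Mprod t := by
  simp [Mprod]

lemma key : ∀ t : List ℤ, t ≠ [] → (∀ x ∈ t.tail, 2 ≤ x) →
    (Mprod t) 1 1 ≤ 0 ∧ (Mprod t) 0 1 ≤ (Mprod t) 1 1 ∧ (Mprod t) 0 1 ≤ -1 := by
  intro t
  induction t using List.reverseRecOn with
  | nil => intro h; exact absurd rfl h
  | append_singleton t b ih =>
    intro _ htail
    rcases eq_or_ne t [] with rfl | hne
    · simp [Mprod, genMat, Matrix.one_apply]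
    · have hb : 2 ≤ b := by
        apply htail
        rcases t with _ | ⟨a, t⟩
        · exact absurd rfl hne
        · simp
      have htail' : ∀ x ∈ t.tail, 2 ≤ x := by
        intro x hx
        apply htail
        rcases t with _ | ⟨a, t⟩
        · exact absurd rfl hne
        · simp at hx ⊢
          exact Or.inl hx
      obtain ⟨h1, h2, h3⟩ := ih hne htail'
      rw [Mprod_concat]
      have e0 : (genMat b * Mprod t) 0 1 = b * (Mprod t) 0 1 - (Mprod t) 1 1 := by
        simp [genMat, Matrix.mul_apply, Fin.sum_univ_two]; ring
      have e1 : (genMat b * Mprod t) 1 1 = (Mprod t) 0 1 := by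
        simp [genMat, Matrix.mul_apply, Fin.sum_univ_two]
      rw [e0, e1]
      have hmid : b * (Mprod t) 0 1 - (Mprod t) 1 1 ≤ (Mprod t) 0 1 := by
        nlinarith [mul_nonneg (by linarith : (0:ℤ) ≤ b - 2) (by linarith : (0:ℤ) ≤ -(Mprod t) 0 1)]
      exact ⟨by linarith, hmid, by linarith⟩

/-- Any positive solution of `Mₙ(a₁,…,aₙ) = ±S` has some `aᵢ = 1` with
`2 ≤ i ≤ n - 1` (indices written 1-based; below `i` is the 0-based index, so
`1 ≤ i` and `i + 1 < n`). -/
theorem stmt8 (l : List ℤ) (hpos : ∀ x ∈ l, 0 < x)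
    (hsol : Mprod l = !![0, -1; 1, 0] ∨ Mprod l = -!![0, -1; 1, 0]) :
    ∃ i : Fin l.length, 1 ≤ (i : ℕ) ∧ (i : ℕ) + 1 < l.length ∧ l.get i = 1 := by
  by_contra hcon
  push_neg at hcon
  obtain rfl | ⟨t, b, hl⟩ := l.eq_nil_or_concat
  rotate_left
  rw [List.concat_eq_append] at hl
  subst hl
  rotate_left
  · have : Mprod ([] : List ℤ) = 1 := by simp [Mprod]
    rw [this] at hsol
    rcases hsol with h | h
    · have := congrFun (congrFun h 0) 0
      simp [Matrix.one_apply] at this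
    · have := congrFun (congrFun h 0) 0
      simp [Matrix.one_apply] at this
  rcases eq_or_ne t [] with rfl | hne
  · -- l = [b]
    have hM : Mprod [b] = genMat b := by simp [Mprod]
    simp only [List.nil_append] at hsol
    rw [hM] at hsol
    have hbpos : 0 < b := hpos b (by simp)
    rcases hsol with h | h
    · have h00 := congrFun (congrFun h 0) 0
      simp [genMat] at h00
      omega
    · have h10 := congrFun (congrFun h 1) 0
      simp [genMat] at h10
  · -- main case
    have htail : ∀ x ∈ t.tail, 2 ≤ x := by
      intro x hx
      obtain ⟨j, hj, rfl⟩ := List.mem_iff_getElem.mp hx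
      have hjt : j + 1 < t.length := by
        have := t.length_tail ▸ hj
        omega
      have hget : t.tail[j] = t[j+1] := List.getElem_tail hj
      have hlen : (t ++ [b]).length = t.length + 1 := by simp
      have hjl : j + 1 < (t ++ [b]).length := by omega
      have hgetl : (t ++ [b])[j+1] = t[j+1] := List.getElem_append_left hjt
      have hne1 : (t ++ [b]).get ⟨j+1, hjl⟩ ≠ 1 := by
        apply hcon ⟨j+1, hjl⟩ (by simp) (by simp; omega)
      have hposx : 0 < (t ++ [b])[j+1] := hpos _ (by
        exact List.getElem_mem hjl)
      rw [hget, ← hgetl]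
      simp only [List.get_eq_getElem] at hne1
      omega
    obtain ⟨h1, h2, h3⟩ := key t hne htail
    have h11 : (Mprod (t ++ [b])) 1 1 = (Mprod t) 0 1 := by
      rw [Mprod_concat]
      simp [genMat, Matrix.mul_apply, Fin.sum_univ_two]
    rcases hsol with h | h
    · have := congrFun (congrFun h 1) 1
      rw [h11] at this
      simp at this
      omega
    · have := congrFun (congrFun h 1) 1
      rw [h11] at this
      simp at this
      omega
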